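/- Let p be prime, a an integer with 1 ≤ a < p, and t > 1 real. If ‖ax/p‖ > 1/(xt) for all integers 1 ≤ x < p, then every partial quotient b_k(a) in the continued fraction expansion a/p = [0; b_1, b_2, …, b_l] satisfies b_k(a) < t. -/

import Mathlib

/-- The list of partial quotients `[b₁, …, b_l]` of the continued fraction expansion
`a/p = [0; b₁, …, b_l]` (computed by the Euclidean algorithm). -/
def cfl : ℕ → ℕ → List ℕ
  | 0, _ => []
  | (a + 1), p => (p / (a + 1)) :: cfl (p % (a + 1)) (a + 1)
termination_by a _ => a
decreasing_by exact Nat.mod_lt _ (Nat.succ_pos _)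

/-- Distance from a real number to the nearest integer. -/
noncomputable def distNearestInt (z : ℝ) : ℝ := |z - round z|

/-- If `‖ax/p‖ > 1/(xt)` for all integers `1 ≤ x < p` (with `t > 1`), then every
partial quotient `b_k(a)` of the continued fraction of `a/p` satisfies `b_k(a) < t`. -/
lemma cfl_cons (a p : ℕ) (h : 1 ≤ a) : cfl a p = (p / a) :: cfl (p % a) a := by
  cases a with
  | zero => omega
  | succ n => rw [cfl]

lemma round_nearest (x : ℝ) (m : ℤ) : |x - round x| ≤ |x - m| := by
  rcases eq_or_ne m (round x) with h | h
  · rw [h]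
  · have h1 : (1 : ℝ) ≤ |(m : ℝ) - (round x : ℝ)| := by
      have h0 : (1 : ℤ) ≤ |m - round x| := Int.one_le_abs (sub_ne_zero.mpr h)
      exact_mod_cast h0
    have h2 : |x - round x| ≤ 1/2 := abs_sub_round x
    have h3 : |(m:ℝ) - round x| ≤ |x - m| + |x - round x| := by
      calc |(m:ℝ) - round x| = |(x - round x) - (x - m)| := by ring_nf
        _ ≤ |x - round x| + |x - m| := abs_sub _ _
        _ = |x - m| + |x - round x| := by ring
    linarith

lemma aux : ∀ a p : ℕ, 1 ≤ a → a ≤ p → ∀ k (hk : k < (cfl a p).length),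
    ∃ x u r : ℕ, 1 ≤ x ∧ 1 ≤ r ∧ r ≤ a ∧
      |(a:ℤ) * x - (u:ℤ) * p| = r ∧
      (cfl a p).get ⟨k, hk⟩ * x * r ≤ p ∧ (cfl a p).get ⟨k, hk⟩ * u * r ≤ a := by
  intro a
  induction a using Nat.strong_induction_on with
  | _ a IH =>
    intro p ha1 hap k hk
    have hcfl : cfl a p = (p / a) :: cfl (p % a) a := cfl_cons a p ha1
    cases k with
    | zero =>
      have hget0 : (cfl a p).get ⟨0, hk⟩ = p / a := by
        rw [List.get_of_eq hcfl]; rfl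
      refine ⟨1, 0, a, le_refl 1, ha1, le_refl a, ?_, ?_, ?_⟩
      · rw [Nat.cast_one, Nat.cast_zero, mul_one, zero_mul, sub_zero,
          abs_of_nonneg (by positivity)]
      · rw [hget0]
        simpa using Nat.div_mul_le_self p a
      · simp [hget0]
    | succ k =>
      have hk' : k < (cfl (p % a) a).length := by
        have h := hk; rw [hcfl] at h; simpa using h
      have hmod1 : 1 ≤ p % a := by
        by_contra h
        have h0 : p % a = 0 := by omega
        rw [h0, cfl] at hk'
        simp at hk'
      have hmodlt : p % a < a := Nat.mod_lt _ (by omega)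
      obtain ⟨x', u', r', hx', hr', hra, habs, h1, h2⟩ :=
        IH (p % a) hmodlt a hmod1 (le_of_lt hmodlt) k hk'
      have hget : (cfl a p).get ⟨k + 1, hk⟩ = (cfl (p % a) a).get ⟨k, hk'⟩ := by
        rw [List.get_of_eq hcfl]; rfl
      set b := (cfl (p % a) a).get ⟨k, hk'⟩ with hb
      set q := p / a with hq
      set s := p % a with hs
      have hps : a * q + s = p := Nat.div_add_mod p a
      refine ⟨q * x' + u', x', r', ?_, hr', le_trans hra (le_of_lt hmodlt), ?_, ?_, ?_⟩
      · have hq1 : 1 ≤ q := (Nat.one_le_div_iff (by omega)).mpr hap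
        calc 1 ≤ 1 * 1 := by norm_num
          _ ≤ q * x' := Nat.mul_le_mul hq1 hx'
          _ ≤ q * x' + u' := Nat.le_add_right _ _
      · have key : (a:ℤ) * (↑(q * x' + u')) - (x' : ℤ) * p = -((s:ℤ) * x' - (u':ℤ) * a) := by
          have hp : (p:ℤ) = (a:ℤ) * q + s := by exact_mod_cast hps.symm
          rw [hp]; push_cast; ring
        rw [key, abs_neg]
        exact habs
      · rw [hget]
        calc b * (q * x' + u') * r' = q * (b * x' * r') + b * u' * r' := by ring
          _ ≤ q * a + s := Nat.add_le_add (Nat.mul_le_mul_left _ h1) h2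
          _ = p := by rw [Nat.mul_comm q a]; exact hps
      · rw [hget]; exact h1

theorem partial_quotients_lt (p : ℕ) (hp : p.Prime) (a : ℕ) (ha1 : 1 ≤ a) (hap : a < p)
    (t : ℝ) (ht : 1 < t)
    (H : ∀ x : ℕ, 1 ≤ x → x < p →
      1 / ((x : ℝ) * t) < distNearestInt ((a : ℝ) * x / p))
    (k : ℕ) (hk : k < (cfl a p).length) :
    ((cfl a p).get ⟨k, hk⟩ : ℝ) < t := by
  obtain ⟨x, u, r, hx1, hr1, hra, habs, hbx, -⟩ := aux a p ha1 (le_of_lt hap) k hk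
  set b := (cfl a p).get ⟨k, hk⟩ with hb
  rcases Nat.eq_zero_or_pos b with hb0 | hb0
  · rw [hb0]; exact lt_trans (by norm_num) ht
  have hp0 : 0 < p := hp.pos
  have hxlep : x ≤ p := by
    calc x = 1 * x * 1 := by ring
      _ ≤ b * x * r := Nat.mul_le_mul (Nat.mul_le_mul hb0 le_rfl) hr1
      _ ≤ p := hbx
  have hxp : x < p := by
    rcases lt_or_eq_of_le hxlep with h | h
    · exact h
    · exfalso
      subst h
      have hdvd : (x : ℤ) ∣ ((a : ℤ) * x - u * x) := ⟨(a : ℤ) - u, by ring⟩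
      have hdvd2 : (x : ℤ) ∣ (r : ℤ) := by
        rw [← habs]; exact (dvd_abs _ _).mpr hdvd
      have : x ∣ r := by exact_mod_cast hdvd2
      have := Nat.le_of_dvd hr1 this
      omega
  have hH := H x hx1 hxp
  have hpR : (0 : ℝ) < p := by exact_mod_cast hp0
  have hxR : (0 : ℝ) < x := by exact_mod_cast hx1
  have hbR : (0 : ℝ) < b := by exact_mod_cast hb0
  have habsR : |(a : ℝ) * x - (u : ℝ) * p| = r := by exact_mod_cast habs
  have hd : distNearestInt ((a : ℝ) * x / p) ≤ r / p := by
    calc distNearestInt ((a : ℝ) * x / p) ≤ |(a : ℝ) * x / p - (u : ℤ)| :=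
          round_nearest _ u
      _ = r / p := by
          rw [show (a : ℝ) * x / p - ((u : ℤ) : ℝ) = ((a : ℝ) * x - (u : ℝ) * p) / p by
            push_cast; field_simp]
          rw [abs_div, abs_of_pos hpR, habsR]
  have h3 : (r : ℝ) / p ≤ 1 / ((b : ℝ) * x) := by
    rw [div_le_div_iff₀ hpR (by positivity)]
    have hc : (b : ℝ) * x * r ≤ p := by exact_mod_cast hbx
    nlinarith
  have h4 : 1 / ((x : ℝ) * t) < 1 / ((b : ℝ) * x) := lt_of_lt_of_le (lt_of_lt_of_le hH hd) h3
  have h5 : (b : ℝ) * x < x * t := by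
    have ht0 : (0 : ℝ) < t := lt_trans one_pos ht
    rw [div_lt_div_iff₀ (by positivity) (by positivity)] at h4
    linarith
  have : (b : ℝ) * x < t * x := by linarith [h5]; 
  exact lt_of_mul_lt_mul_right this hxR.le
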